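/- If σ₁ ≡₀* σ₂ ≤ σ₃ where σ₁, σ₂ are finite firing sequences and σ₃ is a possibly infinite firing sequence of a net N (≡₀* being the reflexive-transitive closure of adjacency), then there exists a firing sequence σ' of N with σ₁ ≤ σ' ≡₀* σ₃; if σ₃ is finite then σ' is finite. -/

import Mathlib

open Relation

/-- A place/transition net with place type `S` and transition type `T`. -/
structure Net (S T : Type) where
  /-- arc weight from place `s` to transition `t` -/
  pre : T → S → ℕ
  /-- arc weight from transition `t` to place `s` -/
  post : T → S → ℕ
  /-- the initial marking -/
  M0 : S → ℕ
  pre_finite : ∀ t, {s | pre t s > 0}.Finite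
  pre_nonempty : ∀ t, ∃ s, pre t s > 0
  post_finite : ∀ t, {s | post t s > 0}.Finite

namespace Net

variable {S T : Type} (N : Net S T)

/-- the singleton step `{t}` is enabled at marking `M` -/
def Enabled (t : T) (M : S → ℕ) : Prop := ∀ s, N.pre t s ≤ M s

/-- the two-element multiset step `{t,u}` is enabled at marking `M` -/
def Enabled2 (t u : T) (M : S → ℕ) : Prop := ∀ s, N.pre t s + N.pre u s ≤ M s

/-- firing transition `t` leads from marking `M` to marking `M'` -/
def Fires (t : T) (M M' : S → ℕ) : Prop :=
  N.Enabled t M ∧ M' = fun s => M s - N.pre t s + N.post t s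

/-- firing the finite transition sequence `σ` leads from `M` to `M'` -/
inductive FiresList : (S → ℕ) → List T → (S → ℕ) → Prop
  | nil (M : S → ℕ) : FiresList M [] M
  | cons {M M₁ M' : S → ℕ} {t : T} {σ : List T} :
      N.Fires t M M₁ → FiresList M₁ σ M' → FiresList M (t :: σ) M'

/-- a marking is reachable -/
def Reachable (M : S → ℕ) : Prop := ∃ σ : List T, N.FiresList N.M0 σ M

/-- `σ` is a finite firing sequence of `N` -/
def FS (σ : List T) : Prop := ∃ M, N.FiresList N.M0 σ M

/-- `σ` is a (possibly infinite) firing sequence of `N` -/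
def FSInf (σ : Stream'.Seq T) : Prop := ∀ n, N.FS (σ.take n)

/-- adjacency `≡₀` on finite firing sequences -/
def Adj (σ ρ : List T) : Prop :=
  ∃ (α β : List T) (t u : T) (M : S → ℕ),
    σ = α ++ t :: u :: β ∧ ρ = α ++ u :: t :: β ∧
    N.FiresList N.M0 α M ∧ N.Enabled2 t u M ∧ N.FS σ ∧ N.FS ρ

/-- adjacency `≡₀` on possibly infinite firing sequences -/
def AdjSeq (σ ρ : Stream'.Seq T) : Prop :=
  ∃ (α : List T) (β : Stream'.Seq T) (t u : T) (M : S → ℕ),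
    σ = (Stream'.Seq.ofList (α ++ [t, u])).append β ∧
    ρ = (Stream'.Seq.ofList (α ++ [u, t])).append β ∧
    N.FiresList N.M0 α M ∧ N.Enabled2 t u M ∧ N.FSInf σ ∧ N.FSInf ρ

end Net

/-- the finite sequence `l` is a prefix of the possibly infinite sequence `s` -/
def ListPrefixSeq {T : Type} (l : List T) (s : Stream'.Seq T) : Prop :=
  s.take l.length = l

namespace Net

variable {S T : Type} (N : Net S T)

/-- the preorder `⊑₀^∞` on possibly infinite firing sequences -/
def Sqsubseteq0 (σ ρ : Stream'.Seq T) : Prop :=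
  ∀ σ'' : List T, N.FS σ'' → ListPrefixSeq σ'' σ →
    ∃ σ' ρ' : List T, N.FS σ' ∧ N.FS ρ' ∧ σ'' <+: σ' ∧
      ReflTransGen N.Adj σ' ρ' ∧ ListPrefixSeq ρ' ρ

end Net


open Relation
open Stream' (Seq)

section SeqLemmas
variable {T : Type}

lemma seq_take_nil (n : ℕ) : (Seq.nil : Seq T).take n = [] := by
  cases n <;> simp [Seq.take, Seq.destruct_nil]

lemma seq_take_succ_cons (n : ℕ) (a : T) (s : Seq T) :
    (Seq.cons a s).take (n + 1) = a :: s.take n := by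
  rw [Seq.take]; simp [Seq.destruct_cons]

lemma seq_take_append (l : List T) : ∀ (m : ℕ) (s : Seq T),
    ((Seq.ofList l).append s).take m = l.take m ++ s.take (m - l.length) := by
  induction l with
  | nil => intro m s; simp [Seq.ofList_nil, Seq.nil_append]
  | cons a l ih =>
    intro m s
    rw [Seq.ofList_cons, Seq.cons_append]
    cases m with
    | zero => simp [Seq.take]
    | succ k => rw [seq_take_succ_cons, ih k s]; simp

lemma seq_drop_nil : ∀ n : ℕ, (Seq.nil : Seq T).drop n = Seq.nil
  | 0 => rfl
  | n + 1 => by rw [Seq.drop, seq_drop_nil n, Seq.tail_nil]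

lemma seq_reconstruct : ∀ (n : ℕ) (s : Seq T),
    s = (Seq.ofList (s.take n)).append (s.drop n) := by
  intro n
  induction n with
  | zero => intro s; simp [Seq.take, Seq.ofList_nil, Seq.nil_append, Seq.drop]
  | succ n ih =>
    intro s
    induction s using Stream'.Seq.recOn with
    | nil => rw [seq_take_nil, seq_drop_nil, Seq.ofList_nil, Seq.nil_append]
    | cons a s' =>
      rw [seq_take_succ_cons, Seq.ofList_cons, Seq.cons_append,
        ← Seq.dropn_tail, Seq.tail_cons, ← ih s']

lemma seq_get_append_right (l : List T) (s : Seq T) (n : ℕ) :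
    ((Seq.ofList l).append s).get? (l.length + n) = s.get? n := by
  have h := Seq.getElem?_take (l.length + n) (l.length + n + 1) ((Seq.ofList l).append s)
  rw [if_pos (by omega), seq_take_append,
    List.take_of_length_le (by omega : l.length ≤ l.length + n + 1)] at h
  rw [← h, List.getElem?_append_right (by omega)]
  have h2 := Seq.getElem?_take n (l.length + n + 1 - l.length) s
  rw [if_pos (by omega)] at h2
  rw [show l.length + n - l.length = n by omega, h2]

lemma seq_get_append_left (l : List T) (s : Seq T) (n : ℕ) (hn : n < l.length) :
    ((Seq.ofList l).append s).get? n = l[n]? := by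
  have h := Seq.getElem?_take n (n + 1) ((Seq.ofList l).append s)
  rw [if_pos (by omega), seq_take_append] at h
  rw [← h, List.getElem?_append_left (by simp; omega)]
  simp [List.getElem?_take, hn]

lemma seq_terminates_append_iff (l : List T) (s : Seq T) :
    ((Seq.ofList l).append s).Terminates ↔ s.Terminates := by
  constructor
  · rintro ⟨m, hm⟩
    rcases lt_or_ge m l.length with h | h
    · exfalso
      rw [Seq.TerminatedAt, seq_get_append_left l s m h] at hm
      rw [List.getElem?_eq_none_iff] at hm
      omega
    · exact ⟨m - l.length, by
        rw [Seq.TerminatedAt, ← seq_get_append_right l s,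
          show l.length + (m - l.length) = m by omega]; exact hm⟩
  · rintro ⟨n, hn⟩
    exact ⟨l.length + n, by rw [Seq.TerminatedAt, seq_get_append_right]; exact hn⟩

end SeqLemmas

namespace Net
open Stream' (Seq)
variable {S T : Type} (N : Net S T)

lemma firesList_append {M M' : S → ℕ} {l₁ l₂ : List T} :
    N.FiresList M (l₁ ++ l₂) M' ↔ ∃ Mm, N.FiresList M l₁ Mm ∧ N.FiresList Mm l₂ M' := by
  induction l₁ generalizing M with
  | nil =>
    simp only [List.nil_append]
    constructor
    · exact fun h => ⟨M, .nil M, h⟩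
    · rintro ⟨Mm, h1, h2⟩; cases h1; exact h2
  | cons t l₁ ih =>
    constructor
    · intro h
      cases h with
      | cons hf hrest =>
        obtain ⟨Mm, ha, hb⟩ := ih.mp hrest
        exact ⟨Mm, .cons hf ha, hb⟩
    · rintro ⟨Mm, hc, hb⟩
      cases hc with
      | cons hf ha => exact .cons hf (ih.mpr ⟨Mm, ha, hb⟩)

lemma firesList_det {M M₁ M₂ : S → ℕ} {l : List T} :
    N.FiresList M l M₁ → N.FiresList M l M₂ → M₁ = M₂ := by
  induction l generalizing M with
  | nil => rintro h1 h2; cases h1; cases h2; rfl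
  | cons t l ih =>
    intro h1 h2
    cases h1 with
    | cons hf1 hr1 =>
      cases h2 with
      | cons hf2 hr2 =>
        obtain ⟨_, rfl⟩ := hf1
        obtain ⟨_, rfl⟩ := hf2
        exact ih hr1 hr2

lemma fs_of_fs_append {l₁ l₂ : List T} (h : N.FS (l₁ ++ l₂)) : N.FS l₁ := by
  obtain ⟨M', h⟩ := h
  obtain ⟨Mm, h1, _⟩ := (N.firesList_append).mp h
  exact ⟨Mm, h1⟩

lemma fs_take {l : List T} (h : N.FS l) (m : ℕ) : N.FS (l.take m) := by
  have := N.fs_of_fs_append (l₁ := l.take m) (l₂ := l.drop m)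
  rw [List.take_append_drop] at this
  exact this h

lemma swap2 {t u : T} {M : S → ℕ} (h : N.Enabled2 t u M) :
    ∃ M', N.FiresList M [t, u] M' ∧ N.FiresList M [u, t] M' := by
  refine ⟨fun s => M s - N.pre t s + N.post t s - N.pre u s + N.post u s, ?_, ?_⟩
  · exact .cons ⟨fun s => by have := h s; omega, rfl⟩
      (.cons ⟨fun s => by have := h s; dsimp only; omega, rfl⟩ (.nil _))
  · have he : (fun s => M s - N.pre t s + N.post t s - N.pre u s + N.post u s) =
        (fun s => M s - N.pre u s + N.post u s - N.pre t s + N.post t s) := by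
      funext s; have := h s; omega
    rw [he]
    exact .cons ⟨fun s => by have := h s; omega, rfl⟩
      (.cons ⟨fun s => by have := h s; dsimp only; omega, rfl⟩ (.nil _))

lemma step_lemma {σ₁ σ₂ : List T} {σ₃ : Seq T}
    (hA : N.Adj σ₁ σ₂) (h3 : N.FSInf σ₃) (h23 : ListPrefixSeq σ₂ σ₃) :
    ∃ σ' : Seq T, N.FSInf σ' ∧ ListPrefixSeq σ₁ σ' ∧ N.AdjSeq σ' σ₃ ∧
      (σ₃.Terminates → σ'.Terminates) := by
  obtain ⟨α, β, t, u, M, e1, e2, hα, hE, hfs1, hfs2⟩ := hA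
  obtain ⟨M', hswp1, hswp2⟩ := N.swap2 hE
  have e1' : σ₁ = (α ++ [t, u]) ++ β := by simp [e1]
  have e2' : σ₂ = (α ++ [u, t]) ++ β := by simp [e2]
  have hlen : σ₁.length = σ₂.length := by rw [e1, e2]; simp
  set rest : Seq T := σ₃.drop σ₂.length with hrest
  have hσ₃ : σ₃ = (Seq.ofList σ₂).append rest := by
    have := seq_reconstruct σ₂.length σ₃
    rwa [h23] at this
  set σ' : Seq T := (Seq.ofList σ₁).append rest with hσ'
  -- key: FS (σ₂ ++ γ) → FS (σ₁ ++ γ)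
  have key : ∀ γ : List T, N.FS (σ₂ ++ γ) → N.FS (σ₁ ++ γ) := by
    rintro γ ⟨Mf, hf⟩
    rw [e2', List.append_assoc] at hf
    obtain ⟨Mm, hm1, hm2⟩ := (N.firesList_append).mp hf
    obtain ⟨Mm2, hn1, hn2⟩ := (N.firesList_append).mp hm1
    have hMm2 : Mm2 = M := N.firesList_det hn1 hα
    rw [hMm2] at hn2
    have hMm : Mm = M' := N.firesList_det hn2 hswp2
    rw [hMm] at hm2
    refine ⟨Mf, ?_⟩
    rw [e1', List.append_assoc]
    exact (N.firesList_append).mpr ⟨M', (N.firesList_append).mpr ⟨M, hα, hswp1⟩, hm2⟩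
  have hFSInf : N.FSInf σ' := by
    intro m
    rw [hσ', seq_take_append]
    rcases le_or_gt m σ₁.length with h | h
    · rw [show m - σ₁.length = 0 by omega]
      simp only [Seq.take, List.append_nil]
      exact N.fs_take hfs1 m
    · rw [List.take_of_length_le (by omega)]
      have h3' := h3 (σ₂.length + (m - σ₁.length))
      rw [hσ₃, seq_take_append, List.take_of_length_le (by omega),
        show σ₂.length + (m - σ₁.length) - σ₂.length = m - σ₁.length by omega] at h3'
      exact key _ h3'
  refine ⟨σ', hFSInf, ?_, ?_, ?_⟩
  · show σ'.take σ₁.length = σ₁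
    rw [hσ', seq_take_append, Nat.sub_self]
    simp [List.take_of_length_le (le_refl _), Seq.take]
  · refine ⟨α, (Seq.ofList β).append rest, t, u, M, ?_, ?_, hα, hE, hFSInf, h3⟩
    · rw [hσ', e1', Seq.ofList_append, Seq.append_assoc]
    · rw [hσ₃, e2', Seq.ofList_append, Seq.append_assoc]
  · intro ht
    rw [hσ₃, seq_terminates_append_iff] at ht
    rw [hσ', seq_terminates_append_iff]
    exact ht

end Net

theorem swap_prefix_fs {S T : Type} (N : Net S T)
    (σ₁ σ₂ : List T) (σ₃ : Stream'.Seq T)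
    (h1 : N.FS σ₁) (h2 : N.FS σ₂)
    (h12 : Relation.ReflTransGen N.Adj σ₁ σ₂)
    (h3 : N.FSInf σ₃) (h23 : ListPrefixSeq σ₂ σ₃) :
    ∃ σ' : Stream'.Seq T, N.FSInf σ' ∧ ListPrefixSeq σ₁ σ' ∧
      Relation.ReflTransGen N.AdjSeq σ' σ₃ ∧
      (σ₃.Terminates → σ'.Terminates) := by
  clear h1 h2
  induction h12 using Relation.ReflTransGen.head_induction_on with
  | refl => exact ⟨σ₃, h3, h23, Relation.ReflTransGen.refl, fun h => h⟩
  | head hab _ ih =>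
    obtain ⟨σ'', hFS'', hpre'', hchain'', hterm''⟩ := ih
    obtain ⟨σ', hFS', hpre', hadj, hterm⟩ := N.step_lemma hab hFS'' hpre''
    exact ⟨σ', hFS', hpre', Relation.ReflTransGen.head hadj hchain'', fun h => hterm (hterm'' h)⟩
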